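/- Let ν ∈ (0,1), let ι be a finite index set with |ι| ≥ 2, let m : ι → ℝ and a ∈ ι. Then ∫₀^∞ exp( max_{x∈ι} ( m[x] + J(y)·δ[a,x] ) ) · exp(−y) dy = ξ(a;m), where J(y) = (1−ν)y + ln ν and δ[a,x] is the Kronecker delta. -/

import Mathlib

open Real MeasureTheory Finset

set_option linter.unusedSectionVars false

noncomputable section

variable {ι : Type*} [Fintype ι] [DecidableEq ι]

/-- The log-likelihood update function `J(y) = (1-ν)y + ln ν`. -/
def Jfun (ν y : ℝ) : ℝ := (1 - ν) * y + Real.log ν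

/-- `h(ν) = exp(ν ln ν/(1-ν)) - exp(ln ν/(1-ν))`. -/
def hfun (ν : ℝ) : ℝ :=
  Real.exp (ν * Real.log ν / (1 - ν)) - Real.exp (Real.log ν / (1 - ν))

/-- `g(ν) = exp(ln ν/(1-ν)) (1/(ν+1) - ln ν/(1-ν))`. -/
def gfun (ν : ℝ) : ℝ :=
  Real.exp (Real.log ν / (1 - ν)) * (1 / (ν + 1) - Real.log ν / (1 - ν))

/-- Kronecker delta `δ[a,x]` as a real number. -/
def kdelta (a x : ι) : ℝ := if x = a then 1 else 0

theorem univ_nonempty_of_card (hcard : 2 ≤ Fintype.card ι) :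
    (Finset.univ : Finset ι).Nonempty := by
  rw [← Finset.card_pos]
  have : (Finset.univ : Finset ι).card = Fintype.card ι := rfl
  omega

theorem erase_nonempty_of_card (hcard : 2 ≤ Fintype.card ι) (a : ι) :
    ((Finset.univ : Finset ι).erase a).Nonempty := by
  rw [← Finset.card_pos, Finset.card_erase_of_mem (Finset.mem_univ a)]
  have : (Finset.univ : Finset ι).card = Fintype.card ι := rfl
  omega

theorem pairs_nonempty_of_card (hcard : 2 ≤ Fintype.card ι) :
    ((Finset.univ : Finset (ι × ι)).filter fun p => p.1 ≠ p.2).Nonempty := by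
  obtain ⟨a, b, hab⟩ := Fintype.exists_pair_of_one_lt_card (α := ι) (by omega)
  exact ⟨(a, b), by simp [hab]⟩

/-- `max_{â ≠ a} m[â]`. -/
def maxOther (hcard : 2 ≤ Fintype.card ι) (m : ι → ℝ) (a : ι) : ℝ :=
  ((Finset.univ : Finset ι).erase a).sup' (erase_nonempty_of_card hcard a) m

/-- `ξ(a; m)`. -/
def xi (ν : ℝ) (hcard : 2 ≤ Fintype.card ι) (m : ι → ℝ) (a : ι) : ℝ :=
  if maxOther hcard m a - m a < Real.log ν then Real.exp (m a)
  else Real.exp (maxOther hcard m a)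
    + hfun ν * Real.exp ((m a - ν * maxOther hcard m a) / (1 - ν))

/-- `min_{x_i ≠ x_j} (m[x_i] - ν m[x_j])`, over ordered pairs of distinct indices. -/
def minPair (ν : ℝ) (hcard : 2 ≤ Fintype.card ι) (m : ι → ℝ) : ℝ :=
  (((Finset.univ : Finset (ι × ι)).filter fun p => p.1 ≠ p.2).inf'
    (pairs_nonempty_of_card hcard)) (fun p => m p.1 - ν * m p.2)

/-- The feedback density `f(y | m, a) = b[a] ν e^{-νy} + (1-b[a]) e^{-y}`. -/
def fdens (ν : ℝ) (m : ι → ℝ) (a : ι) (y : ℝ) : ℝ :=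
  (Real.exp (m a) / ∑ l, Real.exp (m l)) * (ν * Real.exp (-ν * y))
    + (1 - Real.exp (m a) / ∑ l, Real.exp (m l)) * Real.exp (-y)

/-- Terminal value `V_L(m) = max_x exp(m[x]) / ∑_l exp(m[l])`. -/
def Vterm (hcard : 2 ≤ Fintype.card ι) (m : ι → ℝ) : ℝ :=
  ((Finset.univ : Finset ι).sup' (univ_nonempty_of_card hcard) fun x => Real.exp (m x))
    / ∑ l, Real.exp (m l)



lemma integral_exp_neg_mul_Ioi' {b : ℝ} (hb : 0 < b) (c : ℝ) :
    ∫ y in Set.Ioi c, Real.exp (-(b * y)) = b⁻¹ * Real.exp (-(b * c)) := by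
  have h := MeasureTheory.integral_comp_mul_left_Ioi (fun x => Real.exp (-x)) c hb
  simp only [smul_eq_mul] at h
  rw [h, integral_exp_neg_Ioi]


lemma keyexp {ν : ℝ} (hν0 : 0 < ν) (y z : ℝ) :
    Real.exp (z + Jfun ν y + -y) = Real.exp z * ν * Real.exp (-(ν * y)) := by
  rw [show Real.exp z * ν * Real.exp (-(ν * y))
      = Real.exp (z + Real.log ν + -(ν * y)) by
    rw [Real.exp_add, Real.exp_add, Real.exp_log hν0]]
  congr 1
  unfold Jfun
  ring

lemma sup_split (ν : ℝ) (hcard : 2 ≤ Fintype.card ι) (m : ι → ℝ) (a : ι) (y : ℝ) :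
    (Finset.univ : Finset ι).sup' (univ_nonempty_of_card hcard)
        (fun x => m x + Jfun ν y * kdelta a x)
      = max (m a + Jfun ν y) (maxOther hcard m a) := by
  apply le_antisymm
  · apply Finset.sup'_le
    intro x _
    by_cases hx : x = a
    · subst hx; simp [kdelta]
    · have : m x ≤ maxOther hcard m a :=
        Finset.le_sup' m (Finset.mem_erase.2 ⟨hx, Finset.mem_univ x⟩)
      simp only [kdelta, if_neg hx, mul_zero, add_zero]
      exact le_trans this (le_max_right _ _)
  · apply max_le
    · have := Finset.le_sup' (fun x => m x + Jfun ν y * kdelta a x) (Finset.mem_univ a)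
      convert this using 1; simp [kdelta]
    · apply Finset.sup'_le
      intro x hx
      have hxa : x ≠ a := (Finset.mem_erase.1 hx).1
      have := Finset.le_sup' (fun x => m x + Jfun ν y * kdelta a x) (Finset.mem_univ x)
      convert this using 1; simp [kdelta, hxa]

/-- `∫₀^∞ exp(max_x (m[x] + J(y) δ[a,x])) e^{-y} dy = ξ(a;m)`. -/
theorem integral_max_update_eq_xi
    (ν : ℝ) (hν : ν ∈ Set.Ioo (0:ℝ) 1)
    (hcard : 2 ≤ Fintype.card ι) (m : ι → ℝ) (a : ι) :
    ∫ y in Set.Ioi (0:ℝ),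
        Real.exp ((Finset.univ : Finset ι).sup' (univ_nonempty_of_card hcard)
          (fun x => m x + Jfun ν y * kdelta a x)) * Real.exp (-y)
      = xi ν hcard m a := by
  obtain ⟨hν0, hν1⟩ := hν
  have h1ν : (0:ℝ) < 1 - ν := by linarith
  set M := maxOther hcard m a with hM
  have hrw : ∀ y : ℝ,
      Real.exp ((Finset.univ : Finset ι).sup' (univ_nonempty_of_card hcard)
          (fun x => m x + Jfun ν y * kdelta a x)) * Real.exp (-y)
        = Real.exp (max (m a + Jfun ν y) M) * Real.exp (-y) := by
    intro y; rw [sup_split]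
  rw [MeasureTheory.setIntegral_congr_fun measurableSet_Ioi (fun y _ => hrw y)]
  by_cases hcase : M - m a < Real.log ν
  · -- the max is always m a + J y on Ioi 0
    have heq : ∀ y ∈ Set.Ioi (0:ℝ),
        Real.exp (max (m a + Jfun ν y) M) * Real.exp (-y)
          = Real.exp (m a) * ν * Real.exp (-(ν * y)) := by
      intro y hy
      have hy0 : (0:ℝ) < y := hy
      have hJ : Real.log ν ≤ Jfun ν y := by
        unfold Jfun; nlinarith
      have hmax : max (m a + Jfun ν y) M = m a + Jfun ν y :=
        max_eq_left (by linarith)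
      rw [hmax]
      rw [← Real.exp_add, keyexp hν0]
    rw [MeasureTheory.setIntegral_congr_fun measurableSet_Ioi heq]
    rw [MeasureTheory.integral_const_mul, integral_exp_neg_mul_Ioi' hν0]
    rw [xi, if_pos hcase]
    field_simp
    simp
  · -- threshold c ≥ 0
    set c : ℝ := (M - m a - Real.log ν) / (1 - ν) with hc
    have hc0 : 0 ≤ c := div_nonneg (by linarith [not_lt.1 hcase]) h1ν.le
    have hkey : ∀ y : ℝ, m a + Jfun ν y ≤ M ↔ y ≤ c := by
      intro y
      unfold Jfun
      rw [le_div_iff₀ h1ν]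
      constructor <;> intro h <;> nlinarith
    have hunion : Set.Ioc (0:ℝ) c ∪ Set.Ioi c = Set.Ioi 0 := Set.Ioc_union_Ioi_eq_Ioi hc0
    have hf1 : MeasureTheory.IntegrableOn
        (fun y => Real.exp (max (m a + Jfun ν y) M) * Real.exp (-y)) (Set.Ioc 0 c) := by
      apply Continuous.integrableOn_Ioc
      apply Continuous.mul _ (Real.continuous_exp.comp continuous_neg)
      apply Real.continuous_exp.comp
      apply Continuous.max _ continuous_const
      unfold Jfun
      continuity
    have hf2 : MeasureTheory.IntegrableOn
        (fun y => Real.exp (max (m a + Jfun ν y) M) * Real.exp (-y)) (Set.Ioi c) := by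
      have heq2 : ∀ y ∈ Set.Ioi c,
          Real.exp (max (m a + Jfun ν y) M) * Real.exp (-y)
            = Real.exp (m a) * ν * Real.exp (-(ν * y)) := by
        intro y hy
        have : ¬ (m a + Jfun ν y ≤ M) := by
          rw [hkey]; exact not_le.2 hy
        rw [max_eq_left (le_of_not_ge this)]
        rw [← Real.exp_add, keyexp hν0]
      rw [MeasureTheory.integrableOn_congr_fun heq2 measurableSet_Ioi]
      exact ((exp_neg_integrableOn_Ioi c hν0).congr_fun
        (fun y _ => by ring_nf) measurableSet_Ioi).const_mul _
    rw [← hunion, MeasureTheory.setIntegral_union (Set.Ioc_disjoint_Ioi le_rfl)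
      measurableSet_Ioi hf1 hf2]
    have hI1 : (∫ y in Set.Ioc (0:ℝ) c,
        Real.exp (max (m a + Jfun ν y) M) * Real.exp (-y))
          = Real.exp M * (1 - Real.exp (-c)) := by
      have heq1 : ∀ y ∈ Set.Ioc (0:ℝ) c,
          Real.exp (max (m a + Jfun ν y) M) * Real.exp (-y)
            = Real.exp M * Real.exp (-y) := by
        intro y hy
        rw [max_eq_right ((hkey y).2 hy.2)]
      rw [MeasureTheory.setIntegral_congr_fun measurableSet_Ioc heq1,
        MeasureTheory.integral_const_mul,
        ← intervalIntegral.integral_of_le hc0]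
      have : (∫ y in (0:ℝ)..c, Real.exp (-y)) = 1 - Real.exp (-c) := by
        rw [intervalIntegral.integral_comp_neg (fun y => Real.exp y)]
        rw [integral_exp]
        simp
      rw [this]
    have hI2 : (∫ y in Set.Ioi c,
        Real.exp (max (m a + Jfun ν y) M) * Real.exp (-y))
          = Real.exp (m a) * Real.exp (-(ν * c)) := by
      have heq2 : ∀ y ∈ Set.Ioi c,
          Real.exp (max (m a + Jfun ν y) M) * Real.exp (-y)
            = Real.exp (m a) * ν * Real.exp (-(ν * y)) := by
        intro y hy
        have : ¬ (m a + Jfun ν y ≤ M) := by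
          rw [hkey]; exact not_le.2 hy
        rw [max_eq_left (le_of_not_ge this)]
        rw [← Real.exp_add, keyexp hν0]
      rw [MeasureTheory.setIntegral_congr_fun measurableSet_Ioi heq2,
        MeasureTheory.integral_const_mul, integral_exp_neg_mul_Ioi' hν0]
      field_simp
    rw [hI1, hI2, xi, if_neg hcase, hfun]
    have e1 : M - c = Real.log ν / (1 - ν) + (m a - ν * M) / (1 - ν) := by
      rw [hc]; field_simp; ring
    have e2 : m a - ν * c = ν * Real.log ν / (1 - ν) + (m a - ν * M) / (1 - ν) := by
      rw [hc]; field_simp; ring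
    have h3 : Real.exp M * Real.exp (-c) = Real.exp (Real.log ν / (1 - ν)) *
        Real.exp ((m a - ν * M) / (1 - ν)) := by
      rw [← Real.exp_add, ← Real.exp_add, ← e1]; ring_nf
    have h4 : Real.exp (m a) * Real.exp (-(ν * c)) = Real.exp (ν * Real.log ν / (1 - ν)) *
        Real.exp ((m a - ν * M) / (1 - ν)) := by
      rw [← Real.exp_add, ← Real.exp_add, ← e2]; ring_nf
    rw [mul_sub, h4]
    nlinarith [h3]

end
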